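/- Both outer rows have the magic sum: ∑_{j=1}^{n} R₁(j) = n(n²+1)/2 and ∑_{j=1}^{n} Rₙ(j) = n(n²+1)/2. -/

import Mathlib

/-- Base array of the singly-even construction on rows `1 ≤ r ≤ n-2`, columns `1 ≤ c ≤ n`:
for `1 ≤ k ≤ n/2 - 1`, if `k` is odd then `B' r k = (k-1)(n-2) + r` and
`B' r (n+1-k) = 2p - k(n-2) + r`; if `k` is even then `B' r k = k(n-2) + 1 - r` and
`B' r (n+1-k) = 2p - (k-1)(n-2) + 1 - r`; and for `k = m = n/2`,
`B' r m = (m-1)(n-2) + r` and `B' r (m+1) = 2p - (m-1)(n-2) + 1 - r`, where `p = n²/2`. -/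
def B' (n r c : ℕ) : ℕ :=
  if c ≤ n / 2 - 1 then
    if Odd c then (c - 1) * (n - 2) + r else c * (n - 2) + 1 - r
  else if c = n / 2 then (n / 2 - 1) * (n - 2) + r
  else if c = n / 2 + 1 then 2 * (n ^ 2 / 2) - (n / 2 - 1) * (n - 2) + 1 - r
  else
    if Odd (n + 1 - c) then 2 * (n ^ 2 / 2) - (n + 1 - c) * (n - 2) + r
    else 2 * (n ^ 2 / 2) - (n + 1 - c - 1) * (n - 2) + 1 - r

/-- The set of rows to be swapped:
`S' = {r : r even, r ≤ (n-2)/2} ∪ {r : r odd, (n-2)/2 < r ≤ n-3}`. -/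
def S' (n r : ℕ) : Prop :=
  (Even r ∧ r ≤ (n - 2) / 2) ∨ (Odd r ∧ (n - 2) / 2 < r ∧ r ≤ n - 3)

instance (n r : ℕ) : Decidable (S' n r) := by unfold S'; infer_instance

/-- The inner array: `G r c = B' r (n+1-c)` if `r ∈ S'`, and `G r c = B' r c` otherwise. -/
def G (n r c : ℕ) : ℕ := if S' n r then B' n r (n + 1 - c) else B' n r c

/-- The first row of the singly-even construction, with `p = n²/2` and `m = n/2`:
`R₁ 1 = p+1`, `R₁ n = p+2`, `R₁ (m+2) = p+n-m`, `R₁ (m+3) = p+n-m-1`;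
for `2 ≤ j ≤ m+1`, `R₁ j = p-n+j-1` if `j` even and `R₁ j = p+n+2-j` if `j` odd;
for `m+4 ≤ j ≤ n-1`, `R₁ j = p-n+j-1` if `j` odd and `R₁ j = p+n+2-j` if `j` even. -/
def R1 (n j : ℕ) : ℕ :=
  if j = 1 then n ^ 2 / 2 + 1
  else if j = n then n ^ 2 / 2 + 2
  else if j = n / 2 + 2 then n ^ 2 / 2 + n - n / 2
  else if j = n / 2 + 3 then n ^ 2 / 2 + n - n / 2 - 1
  else if j ≤ n / 2 + 1 then
    if Even j then n ^ 2 / 2 - n + j - 1 else n ^ 2 / 2 + n + 2 - j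
  else
    if Odd j then n ^ 2 / 2 - n + j - 1 else n ^ 2 / 2 + n + 2 - j

/-- The last row: `Rₙ j = n² + 1 - R₁ j`. -/
def Rn (n j : ℕ) : ℕ := n ^ 2 + 1 - R1 n j

/-- The complete singly-even array: first row `R₁`, last row `Rₙ`,
and `F' r c = G (r-1) c` for `2 ≤ r ≤ n-1`. -/
def F' (n r c : ℕ) : ℕ :=
  if r = 1 then R1 n c else if r = n then Rn n c else G n (r - 1) c

lemma sum_Ico_pairs (g : ℕ → ℕ) (a : ℕ) : ∀ s, ∑ i ∈ Finset.Ico a (a+2*s), g i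
    = ∑ k ∈ Finset.range s, (g (a+2*k) + g (a+2*k+1))
  | 0 => by simp
  | (s+1) => by
    rw [show a+2*(s+1) = (a+2*s+1)+1 by ring, Finset.sum_Ico_succ_top (by omega),
      Finset.sum_Ico_succ_top (by omega), sum_Ico_pairs g a s, Finset.sum_range_succ]
    ring

lemma R1_lo_even (n j : ℕ) (hn : 10 ≤ n) (hle : j ≤ n/2+1) (he : j % 2 = 0) :
    R1 n j = n^2/2 - n + j - 1 := by
  have h1 : 10*n ≤ n^2 := by nlinarith
  simp only [R1, Nat.even_iff, Nat.odd_iff]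
  generalize n^2 = q at *
  split_ifs <;> omega

lemma R1_lo_odd (n j : ℕ) (hn : 10 ≤ n) (h2 : 3 ≤ j) (hle : j ≤ n/2+1) (he : j % 2 = 1) :
    R1 n j = n^2/2 + n + 2 - j := by
  have h1 : 10*n ≤ n^2 := by nlinarith
  simp only [R1, Nat.even_iff, Nat.odd_iff]
  generalize n^2 = q at *
  split_ifs <;> omega

lemma R1_hi_odd (n j : ℕ) (hn : 10 ≤ n) (h2 : n/2+4 ≤ j) (hle : j ≤ n-1) (he : j % 2 = 1) :
    R1 n j = n^2/2 - n + j - 1 := by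
  have h1 : 10*n ≤ n^2 := by nlinarith
  simp only [R1, Nat.even_iff, Nat.odd_iff]
  generalize n^2 = q at *
  split_ifs <;> omega

lemma R1_hi_even (n j : ℕ) (hn : 10 ≤ n) (h2 : n/2+4 ≤ j) (hle : j ≤ n-1) (he : j % 2 = 0) :
    R1 n j = n^2/2 + n + 2 - j := by
  have h1 : 10*n ≤ n^2 := by nlinarith
  simp only [R1, Nat.even_iff, Nat.odd_iff]
  generalize n^2 = q at *
  split_ifs <;> omega

lemma R1_one (n : ℕ) : R1 n 1 = n^2/2 + 1 := by
  unfold R1; rw [if_pos rfl]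

lemma R1_top (n j : ℕ) (hn : 10 ≤ n) (hj : j = n) : R1 n j = n^2/2 + 2 := by
  subst hj; unfold R1; rw [if_neg (by omega), if_pos rfl]

lemma R1_m2 (n j : ℕ) (hn : 10 ≤ n) (hj : j = n/2+2) : R1 n j = n^2/2 + n - n/2 := by
  subst hj; unfold R1
  rw [if_neg (by omega), if_neg (by omega), if_pos rfl]

lemma R1_m3 (n j : ℕ) (hn : 10 ≤ n) (hj : j = n/2+3) : R1 n j = n^2/2 + n - n/2 - 1 := by
  subst hj; unfold R1
  rw [if_neg (by omega), if_neg (by omega), if_neg (by omega), if_pos rfl]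

lemma R1_le (n j : ℕ) (hn : 10 ≤ n) (hj : j ≤ n) : R1 n j ≤ n^2 := by
  have h1 : 10*n ≤ n^2 := by nlinarith
  simp only [R1, Nat.even_iff, Nat.odd_iff]
  generalize n^2 = q at *
  split_ifs <;> omega

/-- Both outer rows have the magic sum:
`∑_{j=1}^{n} R₁ j = n(n²+1)/2` and `∑_{j=1}^{n} Rₙ j = n(n²+1)/2`. -/
theorem outer_rows_sums (n : ℕ) (h2 : n % 4 = 2) (hn : 10 ≤ n) :
    (∑ j ∈ Finset.Icc 1 n, R1 n j = n * (n ^ 2 + 1) / 2) ∧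
    (∑ j ∈ Finset.Icc 1 n, Rn n j = n * (n ^ 2 + 1) / 2) := by
  obtain ⟨s, rfl⟩ : ∃ s, n = 4*s+10 := ⟨(n-10)/4, by omega⟩
  obtain ⟨u, hu⟩ : ∃ u, s*s = u := ⟨_, rfl⟩
  have hn' : 10 ≤ 4*s+10 := by omega
  have hP : (4*s+10)^2/2 = 8*u+40*s+50 := by
    rw [show (4*s+10)^2 = 2*(8*(s*s)+40*s+50) by ring, hu]
    omega
  have htgt : (4*s+10) * ((4*s+10) ^ 2 + 1) / 2 = (2*s+5) * ((4*s+10)^2+1) := by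
    rw [show (4*s+10) * ((4*s+10)^2+1) = 2*((2*s+5) * ((4*s+10)^2+1)) by ring]
    generalize (2*s+5) * ((4*s+10)^2+1) = w
    omega
  have h1 : ∑ j ∈ Finset.Icc 1 (4*s+10), R1 (4*s+10) j = (2*s+5) * ((4*s+10)^2+1) := by
    rw [← Finset.Ico_add_one_right_eq_Icc,
      ← Finset.sum_Ico_consecutive _ (show (1:ℕ) ≤ 4*s+9 by omega) (show 4*s+9 ≤ 4*s+10+1 by omega),
      ← Finset.sum_Ico_consecutive _ (show (1:ℕ) ≤ 2*s+9 by omega) (show 2*s+9 ≤ 4*s+9 by omega),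
      ← Finset.sum_Ico_consecutive _ (show (1:ℕ) ≤ 2*s+6 by omega) (show 2*s+6 ≤ 2*s+9 by omega),
      ← Finset.sum_Ico_consecutive _ (show (1:ℕ) ≤ 2 by omega) (show 2 ≤ 2*s+6 by omega)]
    -- evaluate each piece
    have p1 : ∑ j ∈ Finset.Ico 1 2, R1 (4*s+10) j = 8*u+40*s+51 := by
      rw [Nat.Ico_succ_singleton, Finset.sum_singleton, R1_one, hP]
    have p2 : ∑ j ∈ Finset.Ico 2 (2*s+6), R1 (4*s+10) j = (s+2) * (16*u+80*s+100) := by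
      rw [show 2*s+6 = 2+2*(s+2) by ring, sum_Ico_pairs]
      rw [Finset.sum_congr rfl (fun k hk => ?_), Finset.sum_const, Finset.card_range, smul_eq_mul]
      simp only [Finset.mem_range] at hk
      rw [R1_lo_even _ _ hn' (by omega) (by omega), R1_lo_odd _ _ hn' (by omega) (by omega) (by omega), hP]
      omega
    have p3 : ∑ j ∈ Finset.Ico (2*s+6) (2*s+9), R1 (4*s+10) j
        = (8*u+38*s+45) + (8*u+42*s+55) + (8*u+42*s+54) := by
      rw [show 2*s+9 = 2*s+6+1+1+1 by ring, Finset.sum_Ico_succ_top (by omega),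
        Finset.sum_Ico_succ_top (by omega), Nat.Ico_succ_singleton, Finset.sum_singleton]
      have a1 : R1 (4*s+10) (2*s+6) = 8*u+38*s+45 := by
        rw [R1_lo_even _ _ hn' (by omega) (by omega), hP]; omega
      have a2 : R1 (4*s+10) (2*s+6+1) = 8*u+42*s+55 := by
        rw [R1_m2 _ _ hn' (by omega), hP]; omega
      have a3 : R1 (4*s+10) (2*s+6+1+1) = 8*u+42*s+54 := by
        rw [R1_m3 _ _ hn' (by omega), hP]; omega
      rw [a1, a2, a3]
    have p4 : ∑ j ∈ Finset.Ico (2*s+9) (4*s+9), R1 (4*s+10) j = s * (16*u+80*s+100) := by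
      rw [show 4*s+9 = (2*s+9)+2*s by ring, sum_Ico_pairs]
      rw [Finset.sum_congr rfl (fun k hk => ?_), Finset.sum_const, Finset.card_range, smul_eq_mul]
      simp only [Finset.mem_range] at hk
      rw [R1_hi_odd _ _ hn' (by omega) (by omega) (by omega),
        R1_hi_even _ _ hn' (by omega) (by omega) (by omega), hP]
      omega
    have p5 : ∑ j ∈ Finset.Ico (4*s+9) (4*s+10+1), R1 (4*s+10) j
        = (8*u+40*s+48) + (8*u+40*s+52) := by
      rw [show 4*s+10+1 = 4*s+9+1+1 by ring, Finset.sum_Ico_succ_top (by omega),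
        Nat.Ico_succ_singleton, Finset.sum_singleton]
      have a1 : R1 (4*s+10) (4*s+9) = 8*u+40*s+48 := by
        rw [R1_hi_odd _ _ hn' (by omega) (by omega) (by omega), hP]; omega
      have a2 : R1 (4*s+10) (4*s+9+1) = 8*u+40*s+52 := by
        rw [R1_top _ _ hn' (by omega), hP] <;> omega
      rw [a1, a2]
    rw [p1, p2, p3, p4, p5, show (4*s+10)^2 = 2*(8*(s*s)+40*s+50) by ring, hu]
    ring
  refine ⟨by rw [h1, htgt], ?_⟩
  unfold Rn
  rw [Finset.sum_tsub_distrib _ (fun j hj => by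
        have := Finset.mem_Icc.mp hj
        have := R1_le (4*s+10) j hn' this.2
        omega),
    h1, Finset.sum_const, Nat.card_Icc, smul_eq_mul, htgt,
    show (4*s+10+1-1) = 4*s+10 by omega,
    show (4*s+10) * ((4*s+10)^2+1) = 2*((2*s+5)*((4*s+10)^2+1)) by ring]
  generalize (2*s+5)*((4*s+10)^2+1) = w
  omega
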